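/- Let b̂_n(q) be the polynomial generating function counting type (B_n,1) Le-diagrams of maximal shape by number of +'s, i.e., fillings of a row of 2n-1 boxes by 0's and +'s such that if there is a 0 strictly to the right of the middle (n-th) box, then the box b immediately to its left and the conjugate box b' (the box symmetric to b about the middle) do not both contain +'s. Then for n ≥ 3, b̂_n(q) = (1+q)^2 b̂_{n-1}(q) - (1+q)q^2 b̂_{n-2}(q), with b̂_0(q)=1, b̂_1(q)=1+q, b̂_2(q) = 1+2q+2q^2+q^3. -/

import Mathlib

attribute [local instance] Classical.propDecidable

/-- A type `(B_n,1)` Le-diagram of maximal shape: a filling of a row of `2n-1` boxes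
(0-indexed positions `0, …, 2n-2`, middle box at position `n-1`, position `p` conjugate to
position `2n-2-p`; `true` = the box contains `+`) such that if a `0` occurs strictly to the
right of the middle box, then the box immediately to its left and the conjugate of that box
do not both contain `+`'s. -/
def IsLeB1 (n : ℕ) (f : Fin (2 * n - 1) → Bool) : Prop :=
  ∀ j : ℕ, ∀ hj : j < 2 * n - 1, ∀ _hn : n ≤ j, f ⟨j, hj⟩ = false →
    ¬ (f ⟨j - 1, by omega⟩ = true ∧ f ⟨2 * n - 1 - j, by omega⟩ = true)

/-- The generating polynomial of type `(B_n,1)` Le-diagrams of maximal shape,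
weighted by `q^(number of +'s)`. -/
noncomputable def bhat (n : ℕ) : Polynomial ℤ :=
  ∑ f ∈ Finset.univ.filter (IsLeB1 n),
    Polynomial.X ^ (Finset.univ.filter (fun p => f p = true)).card

open Finset Polynomial

def cnt {N : ℕ} (f : Fin N → Bool) : ℕ := (Finset.univ.filter (fun p => f p = true)).card

lemma bhat_eq (n : ℕ) : bhat n = ∑ f ∈ Finset.univ.filter (IsLeB1 n), X ^ cnt f := rfl

lemma fval {N : ℕ} (f : Fin N → Bool) {x y : ℕ} {hx : x < N} {hy : y < N} (h : x = y) :
    f ⟨x, hx⟩ = f ⟨y, hy⟩ := by subst h; rfl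

/-- extend a size-(m+1) diagram to a size-(m+2) diagram by adding `a` at position 0
and `b` at position `2*(m+1)`. -/
def extB (m : ℕ) (f : Fin (2*(m+1)-1) → Bool) (a b : Bool) : Fin (2*(m+2)-1) → Bool :=
  fun p => if h0 : (p:ℕ) = 0 then a else if h1 : (p:ℕ) = 2*(m+1) then b
    else f ⟨(p:ℕ)-1, by have := p.isLt; omega⟩

def resB (m : ℕ) (g : Fin (2*(m+2)-1) → Bool) : Fin (2*(m+1)-1) → Bool :=
  fun p => g ⟨(p:ℕ)+1, by have := p.isLt; omega⟩

lemma extB_eval_zero (m : ℕ) (f : Fin (2*(m+1)-1) → Bool) (a b : Bool)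
    {x : ℕ} (hx : x < 2*(m+2)-1) (h : x = 0) : extB m f a b ⟨x, hx⟩ = a := by
  subst h; simp [extB]

lemma extB_eval_last (m : ℕ) (f : Fin (2*(m+1)-1) → Bool) (a b : Bool)
    {x : ℕ} (hx : x < 2*(m+2)-1) (h : x = 2*(m+1)) : extB m f a b ⟨x, hx⟩ = b := by
  subst h; simp [extB]

lemma extB_eval_mid (m : ℕ) (f : Fin (2*(m+1)-1) → Bool) (a b : Bool)
    {x y : ℕ} (hx : x < 2*(m+2)-1) (h0 : x ≠ 0) (h1 : x ≠ 2*(m+1))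
    (hy : y < 2*(m+1)-1) (hxy : x - 1 = y) : extB m f a b ⟨x, hx⟩ = f ⟨y, hy⟩ := by
  simp only [extB]
  rw [dif_neg (by simpa using h0), dif_neg (by simpa using h1)]
  exact fval f (by omega)

lemma extB_resB (m : ℕ) (g : Fin (2*(m+2)-1) → Bool) :
    extB m (resB m g) (g ⟨0, by omega⟩) (g ⟨2*(m+1), by omega⟩) = g := by
  funext p
  rcases p with ⟨x, hx⟩
  by_cases h0 : x = 0
  · rw [extB_eval_zero m _ _ _ hx h0]; exact (fval g h0.symm)
  by_cases h1 : x = 2*(m+1)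
  · rw [extB_eval_last m _ _ _ hx h1]; exact (fval g h1.symm)
  · rw [extB_eval_mid m _ _ _ hx h0 h1 (by omega) rfl]
    simp only [resB, Fin.val_mk]
    exact fval g (by omega)

lemma resB_extB (m : ℕ) (f : Fin (2*(m+1)-1) → Bool) (a b : Bool) :
    resB m (extB m f a b) = f := by
  funext p
  show extB m f a b ⟨(p:ℕ)+1, _⟩ = f p
  rw [extB_eval_mid m f a b _ (by omega) (by have := p.isLt; omega) p.isLt (by omega)]

lemma cnt_cast {N : ℕ} (f : Fin N → Bool) :
    cnt f = ∑ j ∈ Finset.range N, (if h : j < N then (if f ⟨j, h⟩ = true then 1 else 0) else 0) := by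
  rw [cnt, Finset.card_filter]
  rw [← Fin.sum_univ_eq_sum_range (fun j => (if h : j < N then (if f ⟨j, h⟩ = true then 1 else 0) else 0)) N]
  apply Finset.sum_congr rfl
  intro p _
  rw [dif_pos p.isLt]

lemma sum_peel (K D : ℕ) (h : D = K+1+1) (G : ℕ → ℕ) :
    ∑ j ∈ Finset.range D, G j = G 0 + (∑ j ∈ Finset.range K, G (j+1)) + G (K+1) := by
  subst h
  rw [Finset.sum_range_succ, Finset.sum_range_succ']
  ring

lemma cnt_extB (m : ℕ) (f : Fin (2*(m+1)-1) → Bool) (a b : Bool) :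
    cnt (extB m f a b) = cnt f + a.toNat + b.toNat := by
  rw [cnt_cast, cnt_cast, sum_peel (2*(m+1)-1) (2*(m+2)-1) (by omega)]
  have e1 : ∀ j, j < 2*(m+1)-1 → (if h : j + 1 < 2*(m+2)-1 then
      (if extB m f a b ⟨j+1, h⟩ = true then 1 else 0) else 0) =
      (if h : j < 2*(m+1)-1 then (if f ⟨j, h⟩ = true then 1 else 0) else 0) := by
    intro j hj
    rw [dif_pos (by omega), dif_pos hj]
    rw [extB_eval_mid m f a b (by omega : j+1 < 2*(m+2)-1) (by omega) (by omega) hj (by omega)]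
  have e0 : (if h : (0:ℕ) < 2*(m+2)-1 then
      (if extB m f a b ⟨0, h⟩ = true then 1 else 0) else 0) = a.toNat := by
    rw [dif_pos (by omega)]
    rw [extB_eval_zero m f a b (by omega : (0:ℕ) < 2*(m+2)-1) rfl]
    cases a <;> simp
  have eL : (if h : 2*(m+1)-1 + 1 < 2*(m+2)-1 then
      (if extB m f a b ⟨2*(m+1)-1+1, h⟩ = true then 1 else 0) else 0) = b.toNat := by
    rw [dif_pos (by omega)]
    rw [extB_eval_last m f a b (by omega : 2*(m+1)-1+1 < 2*(m+2)-1) (by omega)]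
    cases b <;> simp
  rw [e0, eL, Finset.sum_congr rfl (fun j hj => e1 j (Finset.mem_range.mp hj))]
  omega

lemma isLe_extB (m : ℕ) (f : Fin (2*(m+1)-1) → Bool) (a b : Bool) :
    IsLeB1 (m+2) (extB m f a b) ↔ (IsLeB1 (m+1) f ∧
      (b = false → ¬ (f ⟨2*m, by omega⟩ = true ∧ f ⟨0, by omega⟩ = true))) := by
  constructor
  · intro H
    constructor
    · intro j hj hn hf
      have hj2 : j + 1 < 2*(m+2)-1 := by omega
      have hval : extB m f a b ⟨j+1, hj2⟩ = false := by
        rw [extB_eval_mid m f a b hj2 (by omega) (by omega) hj (by omega)]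
        exact hf
      have H2 := H (j+1) hj2 (by omega) hval
      intro ⟨c1, c2⟩
      apply H2
      constructor
      · rw [extB_eval_mid m f a b (show j+1-1 < 2*(m+2)-1 by omega) (by omega) (by omega)
          (show j-1 < 2*(m+1)-1 by omega) (by omega)]
        exact c1
      · rw [extB_eval_mid m f a b (show 2*(m+2)-1-(j+1) < 2*(m+2)-1 by omega) (by omega) (by omega)
          (show 2*(m+1)-1-j < 2*(m+1)-1 by omega) (by omega)]
        exact c2
    · intro hb
      intro ⟨c1, c2⟩
      have hj2 : 2*(m+1) < 2*(m+2)-1 := by omega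
      have hval : extB m f a b ⟨2*(m+1), hj2⟩ = false := by
        rw [extB_eval_last m f a b hj2 rfl]; exact hb
      have H2 := H (2*(m+1)) hj2 (by omega) hval
      apply H2
      constructor
      · rw [extB_eval_mid m f a b (show 2*(m+1)-1 < 2*(m+2)-1 by omega) (by omega) (by omega)
          (show 2*m < 2*(m+1)-1 by omega) (by omega)]
        exact c1
      · rw [extB_eval_mid m f a b (show 2*(m+2)-1-(2*(m+1)) < 2*(m+2)-1 by omega) (by omega) (by omega)
          (show 0 < 2*(m+1)-1 by omega) (by omega)]
        exact c2
  · intro ⟨Hf, Hs⟩ j hj hn hg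
    by_cases hjl : j = 2*(m+1)
    · subst hjl
      have hb : b = false := by
        rw [extB_eval_last m f a b hj rfl] at hg; exact hg
      intro ⟨c1, c2⟩
      apply Hs hb
      constructor
      · rw [extB_eval_mid m f a b (show 2*(m+1)-1 < 2*(m+2)-1 by omega) (by omega) (by omega)
          (show 2*m < 2*(m+1)-1 by omega) (by omega)] at c1
        exact c1
      · rw [extB_eval_mid m f a b (show 2*(m+2)-1-(2*(m+1)) < 2*(m+2)-1 by omega) (by omega) (by omega)
          (show 0 < 2*(m+1)-1 by omega) (by omega)] at c2
        exact c2
    · have hjr : j < 2*(m+1) := by omega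
      have hg' : f ⟨j-1, by omega⟩ = false := by
        rw [extB_eval_mid m f a b hj (by omega) hjl (show j-1 < 2*(m+1)-1 by omega) (by omega)] at hg
        exact hg
      have H2 := Hf (j-1) (by omega) (by omega) hg'
      intro ⟨c1, c2⟩
      apply H2
      constructor
      · rw [extB_eval_mid m f a b (show j-1 < 2*(m+2)-1 by omega) (by omega) (by omega)
          (show j-1-1 < 2*(m+1)-1 by omega) (by omega)] at c1
        exact c1
      · rw [extB_eval_mid m f a b (show 2*(m+2)-1-j < 2*(m+2)-1 by omega) (by omega) (by omega)
          (show 2*(m+1)-1-(j-1) < 2*(m+1)-1 by omega) (by omega)] at c2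
        exact c2

noncomputable def bB (m : ℕ) : Polynomial ℤ :=
  ∑ f ∈ Finset.univ.filter (fun f : Fin (2*(m+1)-1) → Bool =>
      IsLeB1 (m+1) f ∧ (f ⟨2*m, by omega⟩ = true ∧ f ⟨0, by omega⟩ = true)),
    X ^ cnt f

lemma master (m : ℕ) (φ : Bool → Bool → Polynomial ℤ) :
    ∑ g ∈ Finset.univ.filter (IsLeB1 (m+2)),
      X ^ cnt g * φ (g ⟨0, by omega⟩) (g ⟨2*(m+1), by omega⟩)
    = ∑ x ∈ Finset.univ.filter (fun x : (Fin (2*(m+1)-1) → Bool) × Bool × Bool =>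
        IsLeB1 (m+1) x.1 ∧ (x.2.2 = false →
          ¬ (x.1 ⟨2*m, by omega⟩ = true ∧ x.1 ⟨0, by omega⟩ = true))),
      X ^ (cnt x.1 + x.2.1.toNat + x.2.2.toNat) * φ x.2.1 x.2.2 := by
  apply Finset.sum_nbij'
    (i := fun g => (resB m g, g ⟨0, by omega⟩, g ⟨2*(m+1), by omega⟩))
    (j := fun x => extB m x.1 x.2.1 x.2.2)
  · intro g hg
    simp only [Finset.mem_filter, Finset.mem_univ, true_and] at hg ⊢
    rw [← isLe_extB, extB_resB]
    exact hg
  · intro x hx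
    simp only [Finset.mem_filter, Finset.mem_univ, true_and] at hx ⊢
    rw [isLe_extB]
    exact hx
  · intro g _
    exact extB_resB m g
  · intro x _
    show (resB m (extB m x.1 x.2.1 x.2.2), _, _) = x
    rw [resB_extB]
    rw [extB_eval_zero m x.1 x.2.1 x.2.2 (by omega) rfl,
        extB_eval_last m x.1 x.2.1 x.2.2 (by omega) rfl]
  · intro g _
    have : cnt (extB m (resB m g) (g ⟨0, by omega⟩) (g ⟨2*(m+1), by omega⟩)) = cnt g := by
      rw [extB_resB]
    rw [← this, cnt_extB]

lemma inner1 (Q S : Prop) (c : ℕ) [∀ y : Bool × Bool, Decidable (Q ∧ (y.2 = false → ¬ S))]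
    [Decidable Q] [Decidable (Q ∧ S)] :
    (∑ y : Bool × Bool, if Q ∧ (y.2 = false → ¬ S)
      then (X : Polynomial ℤ) ^ (c + y.1.toNat + y.2.toNat) else 0)
    = (1+X)^2 * (if Q then X ^ c else 0)
      - (1+X) * (if Q ∧ S then X ^ c else 0) := by
  by_cases h1 : Q <;> by_cases h2 : S <;>
    simp [Fintype.sum_prod_type, Fintype.sum_bool, h1, h2, pow_add] <;> ring

lemma inner2 (Q S : Prop) (c : ℕ) [∀ y : Bool × Bool, Decidable (Q ∧ (y.2 = false → ¬ S))]
    [Decidable Q] :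
    (∑ y : Bool × Bool, if Q ∧ (y.2 = false → ¬ S)
      then (X : Polynomial ℤ) ^ (c + y.1.toNat + y.2.toNat) *
        (if y.2 = true ∧ y.1 = true then 1 else 0) else 0)
    = X^2 * (if Q then X ^ c else 0) := by
  by_cases h1 : Q <;> by_cases h2 : S <;>
    simp [Fintype.sum_prod_type, Fintype.sum_bool, h1, h2, pow_add] <;> ring

lemma L1 (m : ℕ) : bhat (m+2) = (1+X)^2 * bhat (m+1) - (1+X) * bB m := by
  have M := master m (fun _ _ => 1)
  simp only [mul_one] at M
  rw [bhat_eq, M, Finset.sum_filter, Fintype.sum_prod_type]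
  trans (∑ f : Fin (2*(m+1)-1) → Bool,
    ((1+X)^2 * (if IsLeB1 (m+1) f then (X : Polynomial ℤ) ^ cnt f else 0)
      - (1+X) * (if IsLeB1 (m+1) f ∧ (f ⟨2*m, by omega⟩ = true ∧ f ⟨0, by omega⟩ = true)
          then X ^ cnt f else 0)))
  · exact Finset.sum_congr rfl (fun f _ => inner1 (IsLeB1 (m+1) f)
      (f ⟨2*m, by omega⟩ = true ∧ f ⟨0, by omega⟩ = true) (cnt f))
  · rw [bhat_eq]
    unfold bB
    rw [Finset.sum_filter, Finset.sum_filter, Finset.mul_sum, Finset.mul_sum,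
      ← Finset.sum_sub_distrib]

lemma L2 (m : ℕ) : bB (m+1) = X^2 * bhat (m+1) := by
  have M := master m (fun a b => if b = true ∧ a = true then 1 else 0)
  have lhs : bB (m+1) = ∑ g ∈ Finset.univ.filter (IsLeB1 (m+2)),
      X ^ cnt g * (if (g ⟨2*(m+1), by omega⟩ : Bool) = true ∧ (g ⟨0, by omega⟩ : Bool) = true
        then 1 else 0) := by
    unfold bB
    rw [Finset.sum_filter, Finset.sum_filter]
    refine Finset.sum_congr rfl (fun g _ => ?_)
    by_cases h1 : IsLeB1 (m+2) g <;>
      by_cases h2 : (g ⟨2*(m+1), by omega⟩ = true ∧ g ⟨0, by omega⟩ = true) <;>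
      simp [h1, h2, show IsLeB1 (m+1+1) g ↔ IsLeB1 (m+2) g from Iff.rfl] <;>
      split_ifs <;> simp_all <;> exact if_neg (fun h => by simp_all)
  rw [lhs, M, Finset.sum_filter, Fintype.sum_prod_type]
  trans (∑ f : Fin (2*(m+1)-1) → Bool,
    X^2 * (if IsLeB1 (m+1) f then (X : Polynomial ℤ) ^ cnt f else 0))
  · exact Finset.sum_congr rfl (fun f _ => inner2 (IsLeB1 (m+1) f)
      (f ⟨2*m, by omega⟩ = true ∧ f ⟨0, by omega⟩ = true) (cnt f))
  · rw [bhat_eq, Finset.sum_filter, Finset.mul_sum]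

lemma bhat_zero : bhat 0 = 1 := by
  rw [bhat_eq]
  have hfil : Finset.univ.filter (IsLeB1 0) = Finset.univ :=
    Finset.filter_true_of_mem (fun f _ => fun j hj _ _ => absurd hj (by omega))
  have huniv : (Finset.univ : Finset (Fin (2*0-1) → Bool)) = {fun _ => false} := by
    apply Finset.eq_singleton_iff_unique_mem.mpr
    refine ⟨Finset.mem_univ _, fun f _ => ?_⟩
    funext p; exact absurd p.isLt (by omega)
  rw [hfil, huniv, Finset.sum_singleton]
  have hc : cnt (fun _ : Fin (2*0-1) => false) = 0 := by
    rw [cnt, Finset.card_eq_zero]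
    apply Finset.eq_empty_of_forall_notMem
    intro p _; exact absurd p.isLt (by omega)
  rw [hc, pow_zero]

lemma bhat_one : bhat 1 = 1 + X := by
  rw [bhat_eq]
  have hfil : Finset.univ.filter (IsLeB1 1) = Finset.univ :=
    Finset.filter_true_of_mem (fun f _ => fun j hj hn _ => absurd hn (by omega))
  have huniv : (Finset.univ : Finset (Fin (2*1-1) → Bool)) =
      {fun _ => false, fun _ => true} := by
    ext f
    simp only [Finset.mem_univ, true_iff, Finset.mem_insert, Finset.mem_singleton]
    cases h : f ⟨0, by omega⟩
    · left; funext p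
      have hp : p = ⟨0, by omega⟩ := Fin.ext (by have := p.isLt; omega)
      rw [hp, h]
    · right; funext p
      have hp : p = ⟨0, by omega⟩ := Fin.ext (by have := p.isLt; omega)
      rw [hp, h]
  have hne : (fun _ : Fin (2*1-1) => false) ≠ (fun _ => true) := by
    intro h; exact absurd (congrFun h ⟨0, by omega⟩) (by simp)
  rw [hfil, huniv, Finset.sum_pair hne]
  have hc0 : cnt (fun _ : Fin (2*1-1) => false) = 0 := by
    rw [cnt, Finset.card_eq_zero]
    apply Finset.eq_empty_of_forall_notMem
    intro p hp
    simp at hp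
  have hc1 : cnt (fun _ : Fin (2*1-1) => true) = 1 := by
    rw [cnt]
    simp [Finset.card_univ]
  rw [hc0, hc1, pow_zero, pow_one]

lemma bB_zero : bB 0 = X := by
  unfold bB
  have hfil : (Finset.univ.filter (fun f : Fin (2*(0+1)-1) → Bool =>
      IsLeB1 (0+1) f ∧ (f ⟨2*0, by omega⟩ = true ∧ f ⟨0, by omega⟩ = true)))
      = {fun _ => true} := by
    ext f
    simp only [Finset.mem_filter, Finset.mem_univ, true_and, Finset.mem_singleton]
    constructor
    · rintro ⟨-, h1, h2⟩
      funext p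
      have hp : p = ⟨0, by omega⟩ := Fin.ext (by have := p.isLt; omega)
      rw [hp]; exact h2
    · rintro rfl
      exact ⟨fun j hj hn _ => absurd hn (by omega), rfl, rfl⟩
  rw [hfil, Finset.sum_singleton]
  have hc1 : cnt (fun _ : Fin (2*(0+1)-1) => true) = 1 := by
    rw [cnt]
    simp [Finset.card_univ]
  rw [hc1, pow_one]

/-- `b̂_n(q)` satisfies `b̂_0 = 1`, `b̂_1 = 1+q`, `b̂_2 = 1+2q+2q²+q³`, and for `n ≥ 3`
the recurrence `b̂_n = (1+q)² b̂_{n-1} − (1+q) q² b̂_{n-2}`; equivalently, `b̂_n(q)` is the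
coefficient of `xⁿ` in `(1-(q+q²)x+(1-q²)x²)/(1-[2]²x+[2]x²)`. -/
theorem bhat_recurrence :
    bhat 0 = 1 ∧
    bhat 1 = 1 + Polynomial.X ∧
    bhat 2 = 1 + 2 * Polynomial.X + 2 * Polynomial.X ^ 2 + Polynomial.X ^ 3 ∧
    ∀ n : ℕ, 3 ≤ n →
      bhat n = (1 + Polynomial.X) ^ 2 * bhat (n - 1) -
        (1 + Polynomial.X) * Polynomial.X ^ 2 * bhat (n - 2) := by
  have h2 : bhat 2 = 1 + 2 * X + 2 * X ^ 2 + X ^ 3 := by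
    have hh := L1 0
    rw [bB_zero] at hh
    norm_num at hh
    rw [bhat_one] at hh
    rw [hh]; ring
  refine ⟨bhat_zero, bhat_one, h2, ?_⟩
  intro n hn
  obtain ⟨m, rfl⟩ : ∃ m, n = m + 3 := ⟨n - 3, by omega⟩
  rw [show m + 3 - 1 = m + 2 from by omega, show m + 3 - 2 = m + 1 from by omega]
  have hL1 := L1 (m+1)
  rw [L2 m] at hL1
  rw [show m + 1 + 2 = m + 3 from by omega, show m + 1 + 1 = m + 2 from by omega] at hL1
  rw [hL1]; ring
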